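/- Let G be a DAG and suppose X is d-connected to Y given C, and Y is d-connected to Z given C, where X, Z ∉ C and Y ∉ C. If X is d-separated from Z given C, then Y is a collider-free-connectable witness: concretely, concatenating an active path from X to Y with an active path from Y to Z given C must fail to be active only because Y becomes a collider at the junction that has no descendant in C; equivalently, X and Z are d-connected given C ∪ {Y} or Y is an ancestor of C ∪ {X, Z}. In particular, if additionally Y is not an ancestor of C ∪ {X, Z}, then X and Z are d-connected given C ∪ {Y}. -/

import Mathlib

variable {V : Type*}

/-- `Ancestor E x y`: there is a (possibly trivial) directed path from `x` to `y`. -/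
def Ancestor (E : V → V → Prop) (x y : V) : Prop :=
  Relation.ReflTransGen E x y

/-- A directed graph is acyclic (a DAG) if it has no directed cycles. -/
def Acyclic (E : V → V → Prop) : Prop :=
  ∀ v : V, ¬ Relation.TransGen E v v

/-- `v` is a collider on the path (vertex list) `l`. -/
def ColliderOn (E : V → V → Prop) (l : List V) (v : V) : Prop :=
  ∃ x y : V, [x, v, y] <:+: l ∧ E x v ∧ E y v

/-- `v` is an interior non-collider on the path `l`. -/
def NonColliderOn (E : V → V → Prop) (l : List V) (v : V) : Prop :=
  (∃ x y : V, [x, v, y] <:+: l) ∧ ¬ ColliderOn E l v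

/-- `l` is a path between `a` and `b` that is active given the conditioning set `C`:
every collider on `l` has a descendant in `C` and no non-collider on `l` is in `C`. -/
def ActivePath (E : V → V → Prop) (C : Set V) (a b : V) (l : List V) : Prop :=
  l.head? = some a ∧ l.getLast? = some b ∧ l.Nodup ∧
  l.Chain' (fun u v => E u v ∨ E v u) ∧
  (∀ v, ColliderOn E l v → ∃ d ∈ C, Ancestor E v d) ∧
  (∀ v, NonColliderOn E l v → v ∉ C)

/-- `a` and `b` are d-connected given `C`. -/
def DConn (E : V → V → Prop) (C : Set V) (a b : V) : Prop :=
  ∃ l : List V, ActivePath E C a b l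

/-- `a` and `b` are d-separated given `C`. -/
def DSep (E : V → V → Prop) (C : Set V) (a b : V) : Prop :=
  ¬ DConn E C a b

private lemma infix3_append {A B : List V} {x u y : V} (h : [x,u,y] <:+: A ++ B) :
    [x,u,y] <:+: A ∨ [x,u,y] <:+: B ∨
      (A.getLast? = some x ∧ [u,y] <+: B) ∨
      ([x,u] <:+ A ∧ B.head? = some y) := by
  obtain ⟨s, t, hst⟩ := h
  rw [List.append_assoc] at hst
  rcases List.append_eq_append_iff.mp hst with ⟨a', hA, hB⟩ | ⟨c', hA, hB⟩
  · rcases a' with _ | ⟨a1, _ | ⟨a2, _ | ⟨a3, a''⟩⟩⟩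
    · right; left; exact ⟨[], t, by simpa using hB⟩
    · simp only [List.cons_append, List.nil_append, List.cons.injEq] at hB
      obtain ⟨rfl, hB⟩ := hB
      right; right; left
      exact ⟨by rw [hA]; exact List.getLast?_concat, ⟨t, hB⟩⟩
    · simp only [List.cons_append, List.nil_append, List.cons.injEq] at hB
      obtain ⟨rfl, rfl, hB⟩ := hB
      right; right; right
      refine ⟨⟨s, hA.symm⟩, ?_⟩
      rw [← hB]; rfl
    · simp only [List.cons_append, List.nil_append, List.cons.injEq] at hB
      obtain ⟨rfl, rfl, rfl, hB⟩ := hB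
      left; exact ⟨s, a'', by rw [hA]; simp⟩
  · right; left; exact ⟨c', t, by rw [hB, List.append_assoc]⟩

private lemma suffix_concat {s : List V} {v x u : V} (h : [x,u] <:+ s ++ [v]) :
    u = v ∧ s.getLast? = some x := by
  obtain ⟨r, hr⟩ := h
  have hr' : (r ++ [x]) ++ [u] = s ++ [v] := by simpa [List.append_assoc] using hr
  obtain ⟨h1, h2⟩ := List.append_inj' hr' rfl
  refine ⟨by injection h2, ?_⟩
  rw [← h1]; exact List.getLast?_concat

private lemma eq_of_splits {u : V} : ∀ (s₁ : List V) {l t₁ s₂ t₂ : List V},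
    l.Nodup → l = s₁ ++ u :: t₁ → l = s₂ ++ u :: t₂ → s₁ = s₂ ∧ t₁ = t₂ := by
  intro s₁
  induction s₁ with
  | nil =>
    intro l t₁ s₂ t₂ hn h1 h2
    subst h1
    cases s₂ with
    | nil => simp only [List.nil_append, List.cons.injEq] at h2; exact ⟨rfl, h2.2⟩
    | cons b s₂ =>
      rw [List.cons_append] at h2
      injection h2 with hb ht
      exfalso
      have := (List.nodup_cons.mp hn).1
      rw [ht] at this; subst hb; simp at this
  | cons a s₁ ih =>
    intro l t₁ s₂ t₂ hn h1 h2
    cases s₂ with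
    | nil =>
      subst h2
      rw [List.cons_append] at h1
      injection h1 with hb ht
      exfalso
      have := (List.nodup_cons.mp hn).1
      rw [ht] at this; subst hb; simp at this
    | cons b s₂ =>
      rw [List.cons_append] at h1 h2
      subst h1
      injection h2 with hb ht
      obtain ⟨hs, hts⟩ := ih (List.nodup_cons.mp hn).2 rfl ht
      exact ⟨by rw [hb, hs], hts⟩

private lemma pattern_unique {l : List V} {x u y x' y' : V} (hn : l.Nodup)
    (h : [x,u,y] <:+: l) (h' : [x',u,y'] <:+: l) : x' = x ∧ y' = y := by
  obtain ⟨s, t, hst⟩ := h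
  obtain ⟨s', t', hst'⟩ := h'
  have e1 : l = (s' ++ [x']) ++ u :: (y' :: t') := by rw [← hst']; simp
  have e2 : l = (s ++ [x]) ++ u :: (y :: t) := by rw [← hst]; simp
  obtain ⟨hs, ht⟩ := eq_of_splits _ hn e1 e2
  constructor
  · have := congrArg List.getLast? hs; simpa [List.getLast?_concat] using this
  · injection ht

private lemma interior_ne_last {l : List V} {x u y b : V} (hn : l.Nodup)
    (h : [x,u,y] <:+: l) (hl : l.getLast? = some b) : u ≠ b := by
  rintro rfl
  obtain ⟨s, t, hst⟩ := h
  obtain ⟨ys, hys⟩ := List.getLast?_eq_some_iff.mp hl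
  obtain ⟨-, ht⟩ := eq_of_splits (u := u) (s ++ [x]) (t₁ := y :: t) (s₂ := ys) (t₂ := []) hn
    (by rw [← hst]; simp) (by simpa using hys)
  simp at ht

private lemma interior_ne_head {l : List V} {x u y a : V} (hn : l.Nodup)
    (h : [x,u,y] <:+: l) (hl : l.head? = some a) : u ≠ a := by
  rintro rfl
  obtain ⟨s, t, hst⟩ := h
  cases l with
  | nil => simp at hl
  | cons c l' =>
    simp only [List.head?_cons, Option.some.injEq] at hl
    subst hl
    obtain ⟨hs, -⟩ := eq_of_splits ([] : List V) (t₁ := l') (s₂ := s ++ [x]) (t₂ := y :: t) hn rfl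
      (by rw [← hst]; simp)
    simp at hs

private lemma sublist_pair {a b : V} : ∀ {l : List V}, List.Sublist [a, b] l →
    ∃ s m t, l = s ++ a :: m ++ b :: t := by
  intro l
  induction l with
  | nil => intro h; simp at h
  | cons c l ih =>
    intro h
    cases h with
    | cons _ h =>
      obtain ⟨s, m, t, rfl⟩ := ih h
      exact ⟨c :: s, m, t, rfl⟩
    | cons_cons _ h =>
      obtain ⟨m, t, rfl⟩ := List.append_of_mem (List.singleton_sublist.mp h)
      exact ⟨[], m, t, rfl⟩

private lemma chase (E : V → V → Prop) :
    ∀ (l : List V) (a b : V), E a b →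
      List.Chain' (fun u v => E u v ∨ E v u) (b :: l) →
      (∃ z, (b :: l).getLast? = some z ∧ Relation.TransGen E a z) ∨
        ∃ x u y, [x,u,y] <:+: (a :: b :: l) ∧ E x u ∧ E y u ∧ Relation.TransGen E a u := by
  intro l
  induction l with
  | nil =>
    intro a b hab _
    exact Or.inl ⟨b, rfl, Relation.TransGen.single hab⟩
  | cons c l ih =>
    intro a b hab hch
    rw [List.Chain', List.isChain_cons_cons] at hch
    obtain ⟨hbc | hcb, hch⟩ := hch
    · rcases ih b c hbc hch with ⟨z, hz, htg⟩ | ⟨x, u, y, hinf, h1, h2, h3⟩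
      · exact Or.inl ⟨z, by simpa using hz, (Relation.TransGen.single hab).trans htg⟩
      · exact Or.inr ⟨x, u, y, hinf.trans ⟨[a], [], by simp⟩,
          h1, h2, (Relation.TransGen.single hab).trans h3⟩
    · exact Or.inr ⟨a, b, c, ⟨[], l, rfl⟩, hab, hcb, Relation.TransGen.single hab⟩
private def WalkOK (E : V → V → Prop) (C' : Set V) (l : List V) : Prop :=
  ∀ x u y, [x,u,y] <:+: l →
    (E x u ∧ E y u → ∃ d ∈ C', Ancestor E u d) ∧ (¬(E x u ∧ E y u) → u ∉ C')

private lemma walk_to_path {E : V → V → Prop} (hacyc : Acyclic E) {C' : Set V} :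
    ∀ (n : ℕ) (l : List V), l.length ≤ n →
      l.Chain' (fun u v => E u v ∨ E v u) → WalkOK E C' l →
      ∀ a b, l.head? = some a → l.getLast? = some b → DConn E C' a b := by
  intro n
  induction n with
  | zero =>
    intro l hlen _ _ a b ha hb
    rw [List.length_eq_zero_iff.mp (Nat.le_zero.mp hlen)] at ha
    simp at ha
  | succ n ih =>
    intro l hlen hch hok a b ha hb
    by_cases hnd : l.Nodup
    · refine ⟨l, ha, hb, hnd, hch, ?_, ?_⟩
      · rintro v ⟨x, y, hinf, h1, h2⟩
        exact (hok x v y hinf).1 ⟨h1, h2⟩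
      · rintro v ⟨⟨x, y, hinf⟩, hnc⟩
        exact (hok x v y hinf).2 (fun h => hnc ⟨x, y, hinf, h.1, h.2⟩)
    · obtain ⟨v, hdup⟩ := List.exists_duplicate_iff_not_nodup.mpr hnd
      obtain ⟨s, m, t, rfl⟩ := sublist_pair (List.duplicate_iff_sublist.mp hdup)
      set l : List V := s ++ v :: m ++ v :: t with hl
      have hm : m ≠ [] := by
        rintro rfl
        have hvv : [v, v] <:+: l := ⟨s, t, by simp [hl]⟩
        have := (List.isChain_pair (R := fun a b => E a b ∨ E b a)).mp (hch.infix hvv)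
        exact hacyc v (Relation.TransGen.single (this.elim id id))
      -- basic infix facts
      have hpre : (s ++ [v]) <:+: l := ⟨[], m ++ v :: t, by simp [hl]⟩
      have hsuf : (v :: t) <:+: l := ⟨s ++ v :: m, [], by simp [hl]⟩
      have hseg : (v :: (m ++ [v])) <:+: l := ⟨s, t, by simp [hl]⟩
      -- the shortened walk
      have hlen' : (s ++ v :: t).length ≤ n := by
        have : l.length ≤ n + 1 := hlen
        have hm1 : 1 ≤ m.length := List.length_pos_iff.mpr hm
        simp only [hl, List.length_append, List.length_cons] at this ⊢
        omega
      have h1 : List.Chain' (fun u v => E u v ∨ E v u) (s ++ [v]) := hch.infix hpre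
      have h2 : List.Chain' (fun u v => E u v ∨ E v u) (v :: t) := hch.infix hsuf
      obtain ⟨hs, -, hlink⟩ := List.isChain_append.mp h1
      have hch' : List.Chain' (fun u v => E u v ∨ E v u) (s ++ v :: t) := by
        refine List.isChain_append.mpr ⟨hs, h2, ?_⟩
        intro x hx y hy
        simp only [List.head?_cons, Option.mem_def, Option.some.injEq] at hy
        subst hy
        exact hlink x hx v rfl
      have hok' : WalkOK E C' (s ++ v :: t) := by
        intro x u y hinf
        have hinf' : [x, u, y] <:+: (s ++ [v]) ++ t := by simpa using hinf
        rcases infix3_append hinf' with hcase | hcase | ⟨hlast, hpref⟩ | ⟨hsuff, hhead⟩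
        · exact hok x u y (hcase.trans hpre)
        · exact hok x u y (hcase.trans (⟨s ++ v :: m ++ [v], [], by simp [hl]⟩ :
            t <:+: l))
        · have hx : x = v := by
            rw [List.getLast?_concat] at hlast; injection hlast with h; exact h.symm
          obtain ⟨r, hr⟩ := hpref
          exact hok x u y ⟨s ++ v :: m, r, by simp [hl, hx, ← hr]⟩
        · obtain ⟨huv, hsx⟩ := suffix_concat hsuff
          subst huv
          obtain ⟨s', rfl⟩ := List.getLast?_eq_some_iff.mp hsx
          obtain ⟨w, m', rfl⟩ := List.exists_cons_of_ne_nil hm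
          obtain ⟨t', rfl⟩ : ∃ t', t = y :: t' := by
            cases t with
            | nil => simp at hhead
            | cons c t' => simp only [List.head?_cons, Option.some.injEq] at hhead
                           exact ⟨t', by rw [hhead]⟩
          constructor
          · rintro ⟨hxu, hyu⟩
            have hvw : E u w ∨ E w u :=
              (List.isChain_pair (R := fun a b => E a b ∨ E b a)).mp (hch.infix ⟨s' ++ [x], m' ++ u :: y :: t', by simp [hl]⟩)
            rcases hvw with hvw | hwv
            · -- chase forward along the segment u :: w :: m' ++ [u]
              have hsegch : List.Chain' (fun a b => E a b ∨ E b a) (u :: w :: (m' ++ [u])) := by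
                refine hch.infix ?_
                refine ⟨s' ++ [x], y :: t', by simp [hl]⟩
              rcases chase E (m' ++ [u]) u w hvw hsegch.tail with ⟨z, hz, htg⟩ | hcol
              · rw [show (w :: (m' ++ [u])).getLast? = some u by
                  rw [show w :: (m' ++ [u]) = (w :: m') ++ [u] by simp, List.getLast?_concat]]
                  at hz
                injection hz with hz
                exact absurd (hz ▸ htg) (hacyc u)
              · obtain ⟨x', u', y', hinf2, e1, e2, htg⟩ := hcol
                have : [x', u', y'] <:+: l := hinf2.trans hseg
                obtain ⟨d, hd, hanc⟩ := (hok x' u' y' this).1 ⟨e1, e2⟩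
                exact ⟨d, hd, Relation.ReflTransGen.trans htg.to_reflTransGen hanc⟩
            · exact (hok x u w ⟨s', m' ++ u :: y :: t', by simp [hl]⟩).1 ⟨hxu, hwv⟩
          · intro hnc hmem
            have hxv : E x u ∨ E u x :=
              (List.isChain_pair (R := fun a b => E a b ∨ E b a)).mp (hch.infix ⟨s', w :: m' ++ u :: y :: t', by simp [hl]⟩)
            have hvy : E u y ∨ E y u := by
              refine (List.isChain_pair (R := fun a b => E a b ∨ E b a)).mp (hch.infix ?_)
              exact ⟨s' ++ x :: u :: w :: m', t', by simp [hl]⟩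
            rcases hxv with hxv | hvx
            · rcases hvy with hvy | hyv
              · -- second occurrence: left neighbor z = last of (w :: m')
                obtain ⟨z, hz⟩ : ∃ z, (w :: m').getLast? = some z :=
                  ⟨_, List.getLast?_eq_getLast (by simp)⟩
                obtain ⟨m'', hm''⟩ := List.getLast?_eq_some_iff.mp hz
                have hp : [z, u, y] <:+: l :=
                  ⟨s' ++ x :: u :: m'', t', by simp [hl, hm'']⟩
                exact (hok z u y hp).2
                  (fun h => hacyc u (Relation.TransGen.head hvy (Relation.TransGen.single h.2)))
                  hmem
              · exact hnc ⟨hxv, hyv⟩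
            · exact (hok x u w ⟨s', m' ++ u :: y :: t', by simp [hl]⟩).2
                (fun h => hacyc u (Relation.TransGen.head hvx (Relation.TransGen.single h.1)))
                hmem
      -- head and last of the shortened walk
      have ha' : (s ++ v :: t).head? = some a := by
        rw [hl] at ha
        cases s with
        | nil => simpa using ha
        | cons c s => simpa using ha
      have hb' : (s ++ v :: t).getLast? = some b := by
        obtain ⟨z, hz⟩ : ∃ z, (v :: t).getLast? = some z :=
          ⟨_, List.getLast?_eq_getLast (by simp)⟩
        have e1 : l.getLast? = some z := by
          rw [show l = (s ++ v :: m) ++ (v :: t) by simp [hl], List.getLast?_append, hz]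
          rfl
        rw [show s ++ v :: t = s ++ (v :: t) by simp, List.getLast?_append, hz]
        rw [e1] at hb
        exact hb
      exact ih (s ++ v :: t) hlen' hch' hok' a b ha' hb'
/-- Composition property of d-connection: if `X` and `Y` are d-connected given `C`, `Y` and
`Z` are d-connected given `C`, but `X ⊥_d Z | C`, then `X` and `Z` are d-connected given
`C ∪ {Y}` or `Y` is an ancestor of `C ∪ {X, Z}`. -/
theorem stmt_9 (E : V → V → Prop) (hacyc : Acyclic E) (X Y Z : V) (C : Set V)
    (hX : X ∉ C) (hZ : Z ∉ C) (hY : Y ∉ C)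
    (hXY : DConn E C X Y) (hYZ : DConn E C Y Z)
    (hXZ : DSep E C X Z) :
    DConn E (C ∪ {Y}) X Z ∨
      (Ancestor E Y X ∨ Ancestor E Y Z ∨ ∃ c ∈ C, Ancestor E Y c) := by
  classical
  by_cases hYX : Y = X
  · subst hYX; exact Or.inr (Or.inl Relation.ReflTransGen.refl)
  by_cases hYZ' : Y = Z
  · subst hYZ'; exact Or.inr (Or.inr (Or.inl Relation.ReflTransGen.refl))
  by_cases hXZ' : X = Z
  · subst hXZ'
    refine Or.inl ⟨[X], rfl, rfl, by simp, List.IsChain.singleton _, ?_, ?_⟩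
    · rintro v ⟨x, y, hinf, -, -⟩
      have := hinf.length_le; simp at this
    · rintro v ⟨⟨x, y, hinf⟩, -⟩
      have := hinf.length_le; simp at this
  obtain ⟨p, hpa, hpb, hpnd, hpch, hpcol, hpnc⟩ := hXY
  obtain ⟨q, hqa, hqb, hqnd, hqch, hqcol, hqnc⟩ := hYZ
  -- decompose p = p' ++ [Y]
  obtain ⟨p', rfl⟩ := List.getLast?_eq_some_iff.mp hpb
  have hp'ne : p' ≠ [] := by
    rintro rfl; simp at hpa; exact hYX hpa
  obtain ⟨g, hg⟩ : ∃ g, p'.getLast? = some g := ⟨_, List.getLast?_eq_getLast hp'ne⟩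
  obtain ⟨-, -, hlinkp⟩ := List.isChain_append.mp hpch
  have hgY : E g Y ∨ E Y g := hlinkp g hg Y rfl
  -- decompose q = Y :: q'
  obtain ⟨q', rfl⟩ : ∃ q', q = Y :: q' := by
    cases q with
    | nil => simp at hqa
    | cons c0 q' => exact ⟨q', by rw [show c0 = Y by simpa using hqa]⟩
  obtain ⟨h, q'', rfl⟩ : ∃ h q'', q' = h :: q'' := by
    cases q' with
    | nil => simp at hqb; exact absurd hqb hYZ'
    | cons h q'' => exact ⟨h, q'', rfl⟩
  have hYh : E Y h ∨ E h Y := (List.isChain_cons_cons.mp hqch).1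
  have hq'ch := (List.isChain_cons_cons.mp hqch).2
  have hq'last : (h :: q'').getLast? = some Z := by
    rw [show (Y :: h :: q'').getLast? = (h :: q'').getLast? by simp] at hqb
    exact hqb
  -- case: edge out of Y to the right
  rcases hYh with hYh | hhY
  · rcases chase E q'' Y h hYh hq'ch with ⟨z, hz, htg⟩ | ⟨x, u, y, hinf, e1, e2, htg⟩
    · rw [hq'last] at hz; injection hz with hz; subst hz
      exact Or.inr (Or.inr (Or.inl htg.to_reflTransGen))
    · obtain ⟨d, hd, hanc⟩ := hqcol u ⟨x, y, hinf, e1, e2⟩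
      exact Or.inr (Or.inr (Or.inr ⟨d, hd,
        Relation.ReflTransGen.trans htg.to_reflTransGen hanc⟩))
  -- case: edge out of Y to the left
  rcases hgY with hgY | hYg
  swap
  · obtain ⟨p'', rfl⟩ := List.getLast?_eq_some_iff.mp hg
    have hrev : (p'' ++ [g] ++ [Y]).reverse = Y :: g :: p''.reverse := by simp
    have hchrev : List.Chain' (fun a b => E a b ∨ E b a) (Y :: g :: p''.reverse) := by
      rw [← hrev]
      exact List.isChain_reverse.mpr (hpch.imp fun a b hab => hab.symm)
    rcases chase E p''.reverse Y g hYg (List.isChain_cons_cons.mp hchrev).2 with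
      ⟨z, hz, htg⟩ | ⟨x, u, y, hinf, e1, e2, htg⟩
    · have : (g :: p''.reverse).getLast? = some X := by
        rw [show g :: p''.reverse = (p'' ++ [g]).reverse by simp, List.getLast?_reverse]
        have := hpa
        rw [List.head?_append] at this
        rw [show (p'' ++ [g]).head? = some X by
          cases p'' with
          | nil => simpa using this
          | cons c p'' => simpa using this]
      rw [this] at hz; injection hz with hz; subst hz
      exact Or.inr (Or.inl htg.to_reflTransGen)
    · have hinf2 : [y, u, x] <:+: p'' ++ [g] ++ [Y] := by
        rw [← List.reverse_infix, hrev]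
        simpa using hinf
      obtain ⟨d, hd, hanc⟩ := hpcol u ⟨y, x, hinf2, e2, e1⟩
      exact Or.inr (Or.inr (Or.inr ⟨d, hd,
        Relation.ReflTransGen.trans htg.to_reflTransGen hanc⟩))
  -- main case: both junction edges point into Y; build a walk from X to Z
  · left
    set w : List V := (p' ++ [Y]) ++ (h :: q'') with hw
    have hwch : List.Chain' (fun a b => E a b ∨ E b a) w := by
      refine List.isChain_append.mpr ⟨hpch, hq'ch, ?_⟩
      intro x hx y hy
      rw [List.getLast?_concat] at hx
      simp only [Option.mem_def, Option.some.injEq, List.head?_cons] at hx hy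
      subst hx; subst hy
      exact Or.inr hhY
    have hq'inf : ∀ x u y : V, [x, u, y] <:+: h :: q'' → [x, u, y] <:+: Y :: h :: q'' :=
      fun x u y hc => hc.trans ⟨[Y], [], by simp⟩
    have qtreat : ∀ x u y : V, [x, u, y] <:+: Y :: h :: q'' →
        (E x u ∧ E y u → ∃ d ∈ C ∪ {Y}, Ancestor E u d) ∧
        (¬(E x u ∧ E y u) → u ∉ C ∪ {Y}) := by
      intro x u y hc
      constructor
      · rintro ⟨e1, e2⟩
        obtain ⟨d, hd, hanc⟩ := hqcol u ⟨x, y, hc, e1, e2⟩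
        exact ⟨d, Or.inl hd, hanc⟩
      · intro hnc hmem
        have hune : u ≠ Y := interior_ne_head hqnd hc hqa
        have huC : u ∉ C := by
          refine hqnc u ⟨⟨x, y, hc⟩, ?_⟩
          rintro ⟨x', y', hinf', e1, e2⟩
          obtain ⟨hx', hy'⟩ := pattern_unique hqnd hinf' hc
          exact hnc ⟨hx' ▸ e1, hy' ▸ e2⟩
        rcases hmem with hmC | hmY
        · exact huC hmC
        · exact hune (by simpa using hmY)
    have hwok : WalkOK E (C ∪ {Y}) w := by
      intro x u y hinf
      rcases infix3_append hinf with hcase | hcase | ⟨hlast, hpref⟩ | ⟨hsuff, hhead⟩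
      · constructor
        · rintro ⟨e1, e2⟩
          obtain ⟨d, hd, hanc⟩ := hpcol u ⟨x, y, hcase, e1, e2⟩
          exact ⟨d, Or.inl hd, hanc⟩
        · intro hnc hmem
          have hune : u ≠ Y := interior_ne_last hpnd hcase (List.getLast?_concat)
          have huC : u ∉ C := by
            refine hpnc u ⟨⟨x, y, hcase⟩, ?_⟩
            rintro ⟨x', y', hinf', e1, e2⟩
            obtain ⟨hx', hy'⟩ := pattern_unique hpnd hinf' hcase
            exact hnc ⟨hx' ▸ e1, hy' ▸ e2⟩
          rcases hmem with hmC | hmY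
          · exact huC hmC
          · exact hune (by simpa using hmY)
      · exact qtreat x u y (hq'inf x u y hcase)
      · have hx : x = Y := by
          rw [List.getLast?_concat] at hlast; injection hlast with hx; exact hx.symm
        obtain ⟨r, hr⟩ := hpref
        rw [hx]
        exact qtreat Y u y ⟨[], r, by simp [← hr]⟩
      · obtain ⟨huY, hgx⟩ := suffix_concat hsuff
        have hx : x = g := by rw [hg] at hgx; injection hgx with hgx; exact hgx.symm
        have hy : y = h := by
          simp only [List.head?_cons, Option.some.injEq] at hhead
          exact hhead.symm
        rw [huY, hx, hy]
        exact ⟨fun _ => ⟨Y, Or.inr rfl, Relation.ReflTransGen.refl⟩,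
          fun hnc => absurd ⟨hgY, hhY⟩ hnc⟩
    have hwa : w.head? = some X := by
      rw [hw, List.head?_append, hpa]; rfl
    have hwb : w.getLast? = some Z := by
      rw [hw, List.getLast?_append, hq'last]; rfl
    exact walk_to_path hacyc w.length w le_rfl hwch hwok X Z hwa hwb
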